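/- There exists a constant C > 0 such that for every n ≥ 1, every word A^(n) = (A₁,…,A_n) ∈ 𝒜ⁿ, and every x ∈ [0,1], the composed inverse branch h_{A^(n)} = h_{A₁}∘⋯∘h_{A_n} satisfies |h_{A^(n)}''(x)| ≤ C·|h_{A^(n)}'(x)| (bounded distortion). -/

import Mathlib

open MeasureTheory Real Set Filter Topology

namespace SCF

/-- The involution `ι(x) = (1−x)/(1+x)`. -/
noncomputable def iota (x : ℝ) : ℝ := (1 - x) / (1 + x)

/-- Even continued-fraction step.  For `y ∈ (0,1/2]` one has
`⌊(1/y+1)/2⌋ = k` whenever `1/y ∈ (2k−1, 2k+1)`, so `Te y = |1/y − 2k|`;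
explicitly `Te y = 1/y − 2` on `[1/3,1/2]`, `Te y = 1/y − 2k` on
`[1/(2k+1), 1/(2k))` and `Te y = 2k − 1/y` on `[1/(2k), 1/(2k−1))` (`k ≥ 2`). -/
noncomputable def Te (y : ℝ) : ℝ := |1 / y - 2 * (⌊(1 / y + 1) / 2⌋ : ℝ)|

/-- The spliced continued fraction (SCF) map `T : [0,1] → [0,1]`, with
`T 0 = 0`, `T 1 = 1`.  On `(0,1/2]` it is the even continued fraction map
(see `Te`), and on `(1/2,1)` it is the odd–odd map, which is the conjugate
`ι ∘ Te ∘ ι` of the even map; this agrees with the branchwise definition: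
`T x = (k x − (k−1))/(k − (k+1) x)` on `((k−1)/k, (2k−1)/(2k+1)]` and
`T x = (k − (k+1) x)/(k x − (k−1))` on `((2k−1)/(2k+1), k/(k+1)]` for `k ≥ 2`. -/
noncomputable def T (x : ℝ) : ℝ :=
  if x ≤ 0 then 0
  else if 1 ≤ x then 1
  else if x ≤ 1 / 2 then Te x
  else iota (Te (iota x))

/-- Parity label of a digit: `e` (even cusp) or `o` (odd–odd cusp). -/
inductive Par | e | o
deriving DecidableEq

/-- A candidate SCF digit `(a, ε)_s`. -/
structure Digit where
  a : ℤ
  eps : ℤ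
  s : Par
deriving DecidableEq

/-- The digit set `𝒜 = {(k,ε)_s : k ≥ 2, ε = ±1, s ∈ {e,o}} ∪ {(1,+1)_e}`. -/
def Digit.Valid (d : Digit) : Prop :=
  (2 ≤ d.a ∧ (d.eps = 1 ∨ d.eps = -1)) ∨ (d.a = 1 ∧ d.eps = 1 ∧ d.s = Par.e)

/-- The branch intervals `I_{(a,ε)_s}` of the SCF map. -/
noncomputable def branch (d : Digit) : Set ℝ :=
  match d.s with
  | Par.e =>
      if d.a = 1 then Set.Icc (1/3 : ℝ) (1/2)
      else if d.eps = 1 then Set.Ico (1 / (2 * (d.a : ℝ) + 1)) (1 / (2 * (d.a : ℝ)))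
      else Set.Ico (1 / (2 * (d.a : ℝ))) (1 / (2 * (d.a : ℝ) - 1))
  | Par.o =>
      if d.eps = 1 then
        Set.Ioc ((2 * (d.a : ℝ) - 1) / (2 * (d.a : ℝ) + 1)) ((d.a : ℝ) / ((d.a : ℝ) + 1))
      else
        Set.Ioc (((d.a : ℝ) - 1) / (d.a : ℝ)) ((2 * (d.a : ℝ) - 1) / (2 * (d.a : ℝ) + 1))

open Classical in
/-- The SCF digit of a point `y` (the unique valid digit `d` with `y ∈ I_d`;
well defined for every `y ∈ (0,1)`). -/
noncomputable def digit (y : ℝ) : Digit :=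
  if h : ∃ d : Digit, d.Valid ∧ y ∈ branch d then h.choose else ⟨1, 1, Par.e⟩

/-- The `n`-th SCF digit `(a_n(x), ε_n(x))_{s_n(x)}` of `x`, `n ≥ 1`,
determined by `T^[n−1] x ∈ I_{(a_n,ε_n)_{s_n}}`. -/
noncomputable def dig (n : ℕ) (x : ℝ) : Digit := digit (T^[n - 1] x)

/-- The `n`-th SCF partial quotient `a_n(x)`. -/
noncomputable def a (n : ℕ) (x : ℝ) : ℤ := (dig n x).a

/-- The invariant density `f_μ`. -/
noncomputable def fdens (x : ℝ) : ℝ :=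
  2 / (Real.log (2 + Real.sqrt 3) * (1 - (2 - Real.sqrt 3) * x) * (1 + Real.sqrt 3 * x))

/-- The absolutely continuous `T`-invariant probability measure `μ` on `(0,1)`. -/
noncomputable def mu : Measure ℝ :=
  (volume.restrict (Set.Ioo (0 : ℝ) 1)).withDensity fun x => ENNReal.ofReal (fdens x)

/-- The inverse branches `h_{(a,ε)_s}` of the SCF map `T`. -/
noncomputable def h (d : Digit) (x : ℝ) : ℝ :=
  match d.s with
  | Par.e => 1 / (2 * (d.a : ℝ) + (d.eps : ℝ) * x)
  | Par.o =>
      if d.eps = 1 then (((d.a : ℝ) - 1) * x + (d.a : ℝ)) / ((d.a : ℝ) * x + ((d.a : ℝ) + 1))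
      else ((d.a : ℝ) * x + ((d.a : ℝ) - 1)) / (((d.a : ℝ) + 1) * x + (d.a : ℝ))

/-- Composed inverse branch `h_{A^{(n)}} = h_{A₁} ∘ ⋯ ∘ h_{A_n}` of a word. -/
noncomputable def hWord (l : List Digit) : ℝ → ℝ :=
  l.foldr (fun d g => h d ∘ g) id

/-- The dual inverse branches `bar h_{(b,η)_t}`. -/
noncomputable def hbar (d : Digit) (y : ℝ) : ℝ :=
  match d.s with
  | Par.e => (d.eps : ℝ) / (2 * (d.a : ℝ) + y)
  | Par.o =>
      1 / (1 + (d.eps : ℝ) / (((d.a : ℝ) - ((max 0 d.eps : ℤ) : ℝ)) + 1 / (1 + y)))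

/-- The matrix `M_{(a,ε)_s}` associated with the inverse branch `h_{(a,ε)_s}`. -/
noncomputable def Mdig (d : Digit) : Matrix (Fin 2) (Fin 2) ℝ :=
  match d.s with
  | Par.e => !![0, 1; (d.eps : ℝ), 2 * (d.a : ℝ)]
  | Par.o =>
      !![(d.a : ℝ) - ((max 0 d.eps : ℤ) : ℝ), (d.a : ℝ) - ((max 0 d.eps : ℤ) : ℝ) + (d.eps : ℝ);
         (d.a : ℝ) - ((max 0 d.eps : ℤ) : ℝ) + 1, (d.a : ℝ) - ((max 0 d.eps : ℤ) : ℝ) + (d.eps : ℝ) + 1]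

/-- `M_n(x) = M_{(a₁,ε₁)_{s₁}} ⋯ M_{(a_n,ε_n)_{s_n}}`. -/
noncomputable def Mn (n : ℕ) (x : ℝ) : Matrix (Fin 2) (Fin 2) ℝ :=
  ((List.range n).map fun i => Mdig (digit (T^[i] x))).prod

/-- `P_n(x)`: the `(1,2)`-entry of `M_n(x)` (numerator of the `n`-th convergent). -/
noncomputable def Pc (n : ℕ) (x : ℝ) : ℝ := Mn n x 0 1

/-- `Q_n(x)`: the `(2,2)`-entry of `M_n(x)` (denominator of the `n`-th convergent). -/
noncomputable def Qc (n : ℕ) (x : ℝ) : ℝ := Mn n x 1 1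


/-! ### Auxiliary material for bounded distortion -/

/-- The open neighborhood `U = (−1/2, 3/2)` of `[0,1]` on which all inverse
branches are defined. -/
private def Uset : Set ℝ := Set.Ioo (-(1:ℝ)/2) (3/2)

private lemma Icc_subset_Uset : Set.Icc (0:ℝ) 1 ⊆ Uset := by
  intro y hy
  exact ⟨by linarith [hy.1], by linarith [hy.2]⟩

private lemma isOpen_Uset : IsOpen Uset := isOpen_Ioo

private lemma mob_hasDerivAt (p q r s x : ℝ) (hx : r * x + s ≠ 0) :
    HasDerivAt (fun y => (p * y + q) / (r * y + s)) ((p * s - q * r) / (r * x + s) ^ 2) x := by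
  have h1 : HasDerivAt (fun y : ℝ => p * y + q) p x := by
    simpa using ((hasDerivAt_id x).const_mul p).add_const q
  have h2 : HasDerivAt (fun y : ℝ => r * y + s) r x := by
    simpa using ((hasDerivAt_id x).const_mul r).add_const s
  have hd := h1.div h2 hx
  refine hd.congr_deriv ?_
  field_simp
  ring

private lemma invsq_hasDerivAt (c r s x : ℝ) (hx : r * x + s ≠ 0) :
    HasDerivAt (fun y => c / (r * y + s) ^ 2) (-2 * r * c / (r * x + s) ^ 3) x := by
  have h2 : HasDerivAt (fun y : ℝ => r * y + s) r x := by
    simpa using ((hasDerivAt_id x).const_mul r).add_const s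
  have h3 := h2.pow 2
  have hd := (hasDerivAt_const x c).div h3 (pow_ne_zero 2 hx)
  refine hd.congr_deriv ?_
  simp only [Pi.pow_apply]
  field_simp
  ring

/-- Packaged facts about a single valid inverse branch as a Möbius map. -/
private lemma digitFacts (d : Digit) (hd : d.Valid) :
    ∃ p q r s : ℝ,
      (∀ x, h d x = (p * x + q) / (r * x + s)) ∧
      |p * s - q * r| = 1 ∧
      (∀ x ∈ Uset, 0 < r * x + s) ∧
      (∀ x ∈ Uset, h d x ∈ Set.Icc (0:ℝ) 1) ∧
      (∀ x ∈ Set.Icc (0:ℝ) 1, 2 ≤ r * x + s) ∧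
      (∀ x ∈ Set.Icc (0:ℝ) 1, 2 * |r| ≤ 3 * (r * x + s)) := by
  obtain ⟨a, eps, sp⟩ := d
  have key : ∀ p q r s : ℝ,
      (∀ x, h ⟨a, eps, sp⟩ x = (p * x + q) / (r * x + s)) →
      |p * s - q * r| = 1 →
      (∀ x ∈ Uset, 0 < r * x + s) →
      (∀ x ∈ Uset, 0 < p * x + q) →
      (∀ x ∈ Uset, p * x + q ≤ r * x + s) →
      (∀ x ∈ Set.Icc (0:ℝ) 1, 2 ≤ r * x + s) →
      (∀ x ∈ Set.Icc (0:ℝ) 1, 2 * |r| ≤ 3 * (r * x + s)) →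
      ∃ p' q' r' s' : ℝ,
        (∀ x, h ⟨a, eps, sp⟩ x = (p' * x + q') / (r' * x + s')) ∧
        |p' * s' - q' * r'| = 1 ∧
        (∀ x ∈ Uset, 0 < r' * x + s') ∧
        (∀ x ∈ Uset, h ⟨a, eps, sp⟩ x ∈ Set.Icc (0:ℝ) 1) ∧
        (∀ x ∈ Set.Icc (0:ℝ) 1, 2 ≤ r' * x + s') ∧
        (∀ x ∈ Set.Icc (0:ℝ) 1, 2 * |r'| ≤ 3 * (r' * x + s')) := by
    intro p q r s heq hdet hDpos hNpos hND h2D hrat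
    refine ⟨p, q, r, s, heq, hdet, hDpos, ?_, h2D, hrat⟩
    intro x hx
    rw [heq]
    have h1 := hDpos x hx
    have h2 := hNpos x hx
    have h3 := hND x hx
    exact ⟨le_of_lt (div_pos h2 h1), by rw [div_le_one h1]; exact h3⟩
  rcases hd with ⟨ha, heps⟩ | ⟨ha, heps, hsp⟩
  · -- a ≥ 2, eps = ±1
    have haR : (2:ℝ) ≤ (a:ℝ) := by exact_mod_cast ha
    cases sp with
    | e =>
      rcases heps with heps | heps <;> subst heps
      · refine key 0 1 1 (2*(a:ℝ)) ?_ (by norm_num) ?_ ?_ ?_ ?_ ?_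
        · intro x; simp only [h]; push_cast; ring_nf
        · intro x hx; obtain ⟨hx1, hx2⟩ := hx; simp only [Uset] at *; nlinarith
        · intro x hx; norm_num
        · intro x hx; obtain ⟨hx1, hx2⟩ := hx; simp only [Uset] at *; nlinarith
        · intro x hx; obtain ⟨hx1, hx2⟩ := hx; nlinarith
        · intro x hx; obtain ⟨hx1, hx2⟩ := hx
          rw [abs_one]; nlinarith
      · refine key 0 1 (-1) (2*(a:ℝ)) ?_ (by norm_num) ?_ ?_ ?_ ?_ ?_
        · intro x; simp only [h]; push_cast; ring_nf
        · intro x hx; obtain ⟨hx1, hx2⟩ := hx; simp only [Uset] at *; nlinarith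
        · intro x hx; norm_num
        · intro x hx; obtain ⟨hx1, hx2⟩ := hx; simp only [Uset] at *; nlinarith
        · intro x hx; obtain ⟨hx1, hx2⟩ := hx; nlinarith
        · intro x hx; obtain ⟨hx1, hx2⟩ := hx
          rw [abs_neg, abs_one]; nlinarith
    | o =>
      rcases heps with heps | heps <;> subst heps
      · refine key ((a:ℝ)-1) (a:ℝ) (a:ℝ) ((a:ℝ)+1) ?_ ?_ ?_ ?_ ?_ ?_ ?_
        · intro x; simp only [h]; norm_num
        · have : ((a:ℝ)-1) * ((a:ℝ)+1) - (a:ℝ) * (a:ℝ) = -1 := by ring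
          rw [this]; norm_num
        · intro x hx; obtain ⟨hx1, hx2⟩ := hx; nlinarith
        · intro x hx; obtain ⟨hx1, hx2⟩ := hx; nlinarith
        · intro x hx; obtain ⟨hx1, hx2⟩ := hx; nlinarith
        · intro x hx; obtain ⟨hx1, hx2⟩ := hx; nlinarith
        · intro x hx; obtain ⟨hx1, hx2⟩ := hx
          rw [abs_of_nonneg (by linarith : (0:ℝ) ≤ (a:ℝ))]; nlinarith
      · refine key (a:ℝ) ((a:ℝ)-1) ((a:ℝ)+1) (a:ℝ) ?_ ?_ ?_ ?_ ?_ ?_ ?_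
        · intro x; simp only [h]; norm_num
        · have : (a:ℝ) * (a:ℝ) - ((a:ℝ)-1) * ((a:ℝ)+1) = 1 := by ring
          rw [this]; norm_num
        · intro x hx; obtain ⟨hx1, hx2⟩ := hx; nlinarith
        · intro x hx; obtain ⟨hx1, hx2⟩ := hx; nlinarith
        · intro x hx; obtain ⟨hx1, hx2⟩ := hx; nlinarith
        · intro x hx; obtain ⟨hx1, hx2⟩ := hx; nlinarith
        · intro x hx; obtain ⟨hx1, hx2⟩ := hx
          rw [abs_of_nonneg (by linarith : (0:ℝ) ≤ (a:ℝ)+1)]; nlinarith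
  · -- a = 1, eps = 1, sp = e
    subst ha heps hsp
    refine key 0 1 1 2 ?_ (by norm_num) ?_ ?_ ?_ ?_ ?_
    · intro x; simp only [h]; push_cast; ring_nf
    · intro x hx; obtain ⟨hx1, hx2⟩ := hx; nlinarith
    · intro x hx; norm_num
    · intro x hx; obtain ⟨hx1, hx2⟩ := hx; nlinarith
    · intro x hx; obtain ⟨hx1, hx2⟩ := hx; nlinarith
    · intro x hx; obtain ⟨hx1, hx2⟩ := hx; rw [abs_one]; nlinarith

/-- Main induction: explicit first and second derivative data for `hWord`. -/
private lemma hWord_facts (l : List Digit) (hv : ∀ d ∈ l, d.Valid) :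
    ∃ F G : ℝ → ℝ,
      (∀ x ∈ Uset, hWord l x ∈ Uset) ∧
      (∀ x ∈ Set.Icc (0:ℝ) 1, hWord l x ∈ Set.Icc (0:ℝ) 1) ∧
      (∀ x ∈ Uset, HasDerivAt (hWord l) (F x) x) ∧
      (∀ x ∈ Uset, HasDerivAt F (G x) x) ∧
      (∀ x ∈ Set.Icc (0:ℝ) 1, |F x| ≤ (1/4 : ℝ) ^ l.length) ∧
      (∀ x ∈ Set.Icc (0:ℝ) 1,
        |G x| ≤ (4 * (1 - (1/4 : ℝ) ^ l.length)) * |F x|) := by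
  induction l with
  | nil =>
    refine ⟨fun _ => 1, fun _ => 0, ?_, ?_, ?_, ?_, ?_, ?_⟩
    · intro x hx; exact hx
    · intro x hx; exact hx
    · intro x _; exact hasDerivAt_id x
    · intro x _; exact hasDerivAt_const x 1
    · intro x _; norm_num
    · intro x _; norm_num
  | cons d t ih =>
    obtain ⟨F, G, hmemU, hmemI, hF, hG, hFb, hGb⟩ :=
      ih (fun d' hd' => hv d' (List.mem_cons_of_mem d hd'))
    obtain ⟨p, q, r, s, heq, hdet, hDpos, hmem, h2D, hrat⟩ :=
      digitFacts d (hv d List.mem_cons_self)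
    set n := t.length with hn
    set g := hWord t with hg
    have hcomp : hWord (d :: t) = h d ∘ g := rfl
    refine ⟨fun y => (p * s - q * r) / (r * g y + s) ^ 2 * F y,
            fun y => (-2 * r * (p * s - q * r) / (r * g y + s) ^ 3 * F y) * F y
              + (p * s - q * r) / (r * g y + s) ^ 2 * G y, ?_, ?_, ?_, ?_, ?_, ?_⟩
    · intro x hx
      exact Icc_subset_Uset (hmem (g x) (hmemU x hx))
    · intro x hx
      exact hmem (g x) (hmemU x (Icc_subset_Uset hx))
    · intro x hx
      have hgx : g x ∈ Uset := hmemU x hx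
      have hD : r * g x + s ≠ 0 := ne_of_gt (hDpos _ hgx)
      have hmob := mob_hasDerivAt p q r s (g x) hD
      have : HasDerivAt (h d) ((p * s - q * r) / (r * g x + s) ^ 2) (g x) := by
        have hfe : (fun y => (p * y + q) / (r * y + s)) = h d := by
          funext y; rw [heq]
        rw [← hfe]; exact hmob
      rw [hcomp]
      exact this.comp x (hF x hx)
    · intro x hx
      have hgx : g x ∈ Uset := hmemU x hx
      have hD : r * g x + s ≠ 0 := ne_of_gt (hDpos _ hgx)
      have h1 : HasDerivAt (fun y => (p * s - q * r) / (r * g y + s) ^ 2)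
          (-2 * r * (p * s - q * r) / (r * g x + s) ^ 3 * F x) x :=
        (invsq_hasDerivAt (p * s - q * r) r s (g x) hD).comp x (hF x hx)
      exact h1.mul (hG x hx)
    · intro x hx
      have hgx : g x ∈ Set.Icc (0:ℝ) 1 := hmemI x hx
      have hD2 : 2 ≤ r * g x + s := h2D _ hgx
      have hDpos' : (0:ℝ) < r * g x + s := by linarith
      have hFx := hFb x hx
      have habs : |(p * s - q * r) / (r * g x + s) ^ 2 * F x|
          = |F x| / (r * g x + s) ^ 2 := by
        rw [abs_mul, abs_div, hdet, abs_pow, abs_of_pos hDpos']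
        ring
      rw [habs, List.length_cons, hn.symm]
      have h4 : (4:ℝ) ≤ (r * g x + s) ^ 2 := by nlinarith
      calc |F x| / (r * g x + s) ^ 2 ≤ (1/4:ℝ) ^ n / 4 :=
            div_le_div₀ (by positivity) hFx (by norm_num) h4
        _ = (1/4:ℝ) ^ (n + 1) := by rw [pow_succ]; ring
    · intro x hx
      have hgx : g x ∈ Set.Icc (0:ℝ) 1 := hmemI x hx
      have hD2 : 2 ≤ r * g x + s := h2D _ hgx
      have hDpos' : (0:ℝ) < r * g x + s := by linarith
      have hrat' := hrat _ hgx
      have hFx := hFb x hx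
      have hGx := hGb x hx
      set D := r * g x + s with hD
      set a1 := |F x| with ha1
      have habsF : |(p * s - q * r) / D ^ 2 * F x| = a1 / D ^ 2 := by
        rw [abs_mul, abs_div, hdet, abs_pow, abs_of_pos hDpos']
        ring
      have hterm1 : |(-2 * r * (p * s - q * r) / D ^ 3 * F x) * F x|
          = 2 * |r| * a1 * a1 / D ^ 3 := by
        rw [abs_mul, abs_mul, abs_div, abs_mul, abs_mul, hdet, abs_pow,
          abs_of_pos hDpos']
        simp [abs_of_nonpos, ha1]
        ring
      have hterm2 : |(p * s - q * r) / D ^ 2 * G x| = |G x| / D ^ 2 := by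
        rw [abs_mul, abs_div, hdet, abs_pow, abs_of_pos hDpos']
        ring
      rw [habsF, List.length_cons, hn.symm]
      calc |(-2 * r * (p * s - q * r) / D ^ 3 * F x) * F x
            + (p * s - q * r) / D ^ 2 * G x|
          ≤ |(-2 * r * (p * s - q * r) / D ^ 3 * F x) * F x|
            + |(p * s - q * r) / D ^ 2 * G x| := abs_add_le _ _
        _ = 2 * |r| * a1 * a1 / D ^ 3 + |G x| / D ^ 2 := by rw [hterm1, hterm2]
        _ ≤ 3 * ((1/4:ℝ) ^ n * (a1 / D ^ 2))
              + (4 * (1 - (1/4:ℝ) ^ n)) * (a1 / D ^ 2) := by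
            have ha1n : (0:ℝ) ≤ a1 := abs_nonneg _
            have hq : (0:ℝ) ≤ a1 / D ^ 2 := by positivity
            have t1 : 2 * |r| * a1 * a1 / D ^ 3
                = (2 * |r| / D) * (a1 * (a1 / D ^ 2)) := by
              field_simp
            have t1b : 2 * |r| / D ≤ 3 := by
              rw [div_le_iff₀ hDpos']
              linarith [hrat']
            have t1c : a1 * (a1 / D ^ 2) ≤ (1/4:ℝ) ^ n * (a1 / D ^ 2) :=
              mul_le_mul_of_nonneg_right hFx hq
            have h1 : 2 * |r| * a1 * a1 / D ^ 3 ≤ 3 * ((1/4:ℝ) ^ n * (a1 / D ^ 2)) := by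
              rw [t1]
              exact mul_le_mul t1b t1c (by positivity) (by norm_num)
            have h2 : |G x| / D ^ 2 ≤ (4 * (1 - (1/4:ℝ) ^ n)) * (a1 / D ^ 2) := by
              rw [← mul_div_assoc]
              exact (div_le_div_iff_of_pos_right (by positivity)).2 hGx
            linarith
        _ = (4 * (1 - (1/4 : ℝ) ^ (n + 1))) * (a1 / D ^ 2) := by
            rw [pow_succ]
            ring

/-- bounded distortion for composed inverse branches:
`|h_{A^{(n)}}''| ≤ C |h_{A^{(n)}}'|` on `[0,1]`, uniformly in the word. -/
theorem bounded_distortion :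
    ∃ C : ℝ, 0 < C ∧ ∀ l : List Digit, l ≠ [] → (∀ d ∈ l, d.Valid) →
      ∀ x ∈ Set.Icc (0 : ℝ) 1,
        |deriv (deriv (hWord l)) x| ≤ C * |deriv (hWord l) x| := by
  refine ⟨4, by norm_num, ?_⟩
  intro l _ hv x hx
  obtain ⟨F, G, hmemU, hmemI, hF, hG, hFb, hGb⟩ := hWord_facts l hv
  have hxU : x ∈ Uset := Icc_subset_Uset hx
  have hd1 : deriv (hWord l) x = F x := (hF x hxU).deriv
  have hev : deriv (hWord l) =ᶠ[nhds x] F := by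
    filter_upwards [isOpen_Uset.mem_nhds hxU] with y hy
    exact (hF y hy).deriv
  have hd2 : deriv (deriv (hWord l)) x = G x := by
    rw [hev.deriv_eq]
    exact (hG x hxU).deriv
  rw [hd1, hd2]
  have hle := hGb x hx
  have hpow : (0:ℝ) ≤ (1/4 : ℝ) ^ l.length := by positivity
  nlinarith [abs_nonneg (F x)]

end SCF
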